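/- Let P ∈ ℝ[x, y] be a polynomial of total degree s and let Q denote its homogeneous component of degree s. If there exists L ∈ ℕ such that P(m, k) ≥ 0 for all integers m, k ≥ L, then Q(x, y) ≥ 0 for all real x, y ≥ 0. -/

import Mathlib

open MvPolynomial Filter Topology Finset

lemma eval_smul_homog (φ : MvPolynomial (Fin 2) ℝ) {n : ℕ} (h : φ.IsHomogeneous n)
    (c : ℝ) (x : Fin 2 → ℝ) :
    eval (fun i => c * x i) φ = c ^ n * eval x φ := by
  rw [eval_eq, eval_eq, Finset.mul_sum]
  apply Finset.sum_congr rfl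
  intro d hd
  have hdeg : d.degree = n := h.coeff_eq_zero (d := d) |>.mt (by
    simpa [MvPolynomial.mem_support_iff] using hd) |> not_not.mp
  have : ∏ i ∈ d.support, (c * x i) ^ d i
      = c ^ d.degree * ∏ i ∈ d.support, x i ^ d i := by
    simp [Finsupp.degree, mul_pow, Finset.prod_mul_distrib, Finset.prod_pow_eq_pow_sum]
    exact Or.inl rfl
  rw [this, hdeg]; ring

lemma coord_tendsto (L : ℕ) {x : ℝ} (hx : 0 ≤ x) :
    Tendsto (fun n : ℕ => ((L + ⌈(n : ℝ) * x⌉₊ : ℕ) : ℝ) / n) atTop (𝓝 x) := by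
  have h1 : Tendsto (fun n : ℕ => (L : ℝ) / n) atTop (𝓝 0) :=
    tendsto_const_div_atTop_nhds_zero_nat _
  have h2 : Tendsto (fun n : ℕ => (⌈(n : ℝ) * x⌉₊ : ℝ) / n) atTop (𝓝 x) := by
    have hupper : Tendsto (fun n : ℕ => x + 1 / (n : ℝ)) atTop (𝓝 x) := by
      simpa using tendsto_const_nhds.add (tendsto_one_div_atTop_nhds_zero_nat : Tendsto (fun n : ℕ => 1 / (n : ℝ)) atTop (𝓝 0))
    apply tendsto_of_tendsto_of_tendsto_of_le_of_le' tendsto_const_nhds hupper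
    · filter_upwards [eventually_ge_atTop 1] with n hn
      have hn' : (0 : ℝ) < n := by exact_mod_cast hn
      rw [le_div_iff₀ hn', mul_comm]
      exact Nat.le_ceil _
    · filter_upwards [eventually_ge_atTop 1] with n hn
      have hn' : (0 : ℝ) < n := by exact_mod_cast hn
      rw [div_le_iff₀ hn']
      have := (Nat.ceil_lt_add_one (by positivity : (0:ℝ) ≤ (n:ℝ) * x)).le
      calc (⌈(n : ℝ) * x⌉₊ : ℝ) ≤ (n : ℝ) * x + 1 := this
        _ = (x + 1 / n) * n := by field_simp
  have := h1.add h2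
  simp only [zero_add] at this
  convert this using 2 with n
  push_cast
  rw [add_div]

theorem stmt_7 (P : MvPolynomial (Fin 2) ℝ) (s : ℕ) (hdeg : P.totalDegree = s)
    (L : ℕ)
    (hpos : ∀ m k : ℕ, L ≤ m → L ≤ k →
      0 ≤ MvPolynomial.eval ![(m : ℝ), (k : ℝ)] P) :
    ∀ x y : ℝ, 0 ≤ x → 0 ≤ y →
      0 ≤ MvPolynomial.eval ![x, y] (MvPolynomial.homogeneousComponent s P) := by
  intro x y hx hy
  set a : ℕ → ℕ := fun n => L + ⌈(n : ℝ) * x⌉₊ with ha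
  set b : ℕ → ℕ := fun n => L + ⌈(n : ℝ) * y⌉₊ with hb
  set v : ℕ → Fin 2 → ℝ := fun n => ![(a n : ℝ) / n, (b n : ℝ) / n] with hv
  -- v n → ![x, y]
  have hvt : Tendsto v atTop (𝓝 ![x, y]) := by
    rw [tendsto_pi_nhds]
    intro i
    fin_cases i
    · simpa [hv, ha] using coord_tendsto L hx
    · simpa [hv, hb] using coord_tendsto L hy
  -- eval continuity composed
  have heval : ∀ φ : MvPolynomial (Fin 2) ℝ,
      Tendsto (fun n => eval (v n) φ) atTop (𝓝 (eval ![x, y] φ)) := fun φ =>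
    ((MvPolynomial.continuous_eval (p := φ)).continuousAt).tendsto.comp hvt
  -- decomposition for n ≥ 1
  have hsum : ∀ n : ℕ, 1 ≤ n →
      eval ![(a n : ℝ), (b n : ℝ)] P / (n : ℝ) ^ s
        = ∑ d ∈ range (s + 1),
            ((n : ℝ) ^ d / (n : ℝ) ^ s) * eval (v n) (homogeneousComponent d P) := by
    intro n hn
    have hn' : (0 : ℝ) < n := by exact_mod_cast hn
    have hPn : eval ![(a n : ℝ), (b n : ℝ)] P
        = ∑ d ∈ range (s + 1), (n : ℝ) ^ d * eval (v n) (homogeneousComponent d P) := by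
      conv_lhs => rw [← P.sum_homogeneousComponent, hdeg]
      rw [map_sum]
      apply Finset.sum_congr rfl
      intro d _
      have hcomp := homogeneousComponent_isHomogeneous d P
      have := eval_smul_homog (homogeneousComponent d P) hcomp (n : ℝ) (v n)
      have harg : (fun i => (n : ℝ) * v n i) = ![(a n : ℝ), (b n : ℝ)] := by
        funext i; fin_cases i <;> simp [hv] <;> field_simp
      rw [← harg, this]
    rw [hPn, Finset.sum_div]
    apply Finset.sum_congr rfl
    intro d _
    ring
  -- limit of the sum
  have hkey : Tendsto (fun n : ℕ => eval ![(a n : ℝ), (b n : ℝ)] P / (n : ℝ) ^ s)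
      atTop (𝓝 (eval ![x, y] (homogeneousComponent s P))) := by
    have hterm : ∀ d ∈ range (s + 1),
        Tendsto (fun n : ℕ => ((n : ℝ) ^ d / (n : ℝ) ^ s) * eval (v n) (homogeneousComponent d P))
          atTop (𝓝 (if d = s then eval ![x, y] (homogeneousComponent s P) else 0)) := by
      intro d hd
      rw [Finset.mem_range] at hd
      rcases eq_or_lt_of_le (Nat.lt_succ_iff.mp hd) with heq | hlt
      · subst heq
        simp only [if_pos rfl]
        have hc : Tendsto (fun n : ℕ => (n : ℝ) ^ d / (n : ℝ) ^ d) atTop (𝓝 1) := by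
          apply Tendsto.congr' _ tendsto_const_nhds
          filter_upwards [eventually_ge_atTop 1] with n hn
          have : (0 : ℝ) < n := by exact_mod_cast hn
          rw [div_self (by positivity)]
        simpa using hc.mul (heval (homogeneousComponent d P))
      · simp only [if_neg hlt.ne]
        have hc : Tendsto (fun n : ℕ => (n : ℝ) ^ d / (n : ℝ) ^ s) atTop (𝓝 0) := by
          have := tendsto_pow_div_pow_atTop_zero (𝕜 := ℝ) hlt
          exact this.comp tendsto_natCast_atTop_atTop
        simpa using hc.mul (heval (homogeneousComponent d P))
    have hsumt := tendsto_finset_sum (range (s + 1)) hterm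
    rw [Finset.sum_ite_eq' (range (s+1)) s] at hsumt
    simp only [Finset.mem_range, Nat.lt_succ_iff, le_refl, if_pos] at hsumt
    apply hsumt.congr'
    filter_upwards [eventually_ge_atTop 1] with n hn
    exact (hsum n hn).symm
  -- positivity of terms
  refine ge_of_tendsto hkey ?_
  filter_upwards [eventually_ge_atTop 1] with n hn
  have hn' : (0 : ℝ) < n := by exact_mod_cast hn
  have := hpos (a n) (b n) (Nat.le_add_right _ _) (Nat.le_add_right _ _)
  positivity
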